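/- Unisolvence of the local stress degrees of freedom: let E ⊂ ℝ² be a polygon and k ≥ 1. If τ_h ∈ Σ_h(E) satisfies ∫_e (τ_h n)·p_k = 0 for all p_k ∈ P_k(e)² and all edges e ⊂ ∂E, and ∫_E div(τ_h)·ψ_k = 0 for all ψ_k ∈ RM_k^⊥(E), then τ_h = 0. -/

import Mathlib

open MeasureTheory Matrix

noncomputable section

abbrev Pt : Type := Fin 2 → ℝ
abbrev M2 : Type := Matrix (Fin 2) (Fin 2) ℝ

/-- clockwise rotation: (c₁,c₂) ↦ (c₂,-c₁) -/
def perp (c : Pt) : Pt := ![c 1, -c 0]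

/-- infinitesimal rigid body motion x ↦ a + b (x - x_C)^⊥ -/
def rigid (xC a : Pt) (b : ℝ) : Pt → Pt := fun x => a + b • perp (x - xC)

/-- the set RM(E) of rigid body motions (with centroid x_C) -/
def RMset (xC : Pt) : Set (Pt → Pt) := {f | ∃ a b, f = rigid xC a b}

/-- vector-valued polynomial of total degree ≤ k -/
def IsVPoly (k : ℕ) (f : Pt → Pt) : Prop :=
  ∃ P : Fin 2 → MvPolynomial (Fin 2) ℝ,
    (∀ i, (P i).totalDegree ≤ k) ∧ ∀ x i, f x i = MvPolynomial.eval x (P i)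

/-- partial derivative ∂_j g -/
def pd (j : Fin 2) (g : Pt → ℝ) (x : Pt) : ℝ := fderiv ℝ g x (Pi.single j 1)

/-- symmetric gradient ε(v) = (∇v + ∇vᵀ)/2 -/
def sgrad (v : Pt → Pt) (x : Pt) : M2 :=
  Matrix.of fun i j => (pd j (fun y => v y i) x + pd i (fun y => v y j) x) / 2

/-- row-wise divergence of a matrix field -/
def mdiv (τ : Pt → M2) (x : Pt) : Pt := fun i => ∑ j, pd j (fun y => τ y i j) x

/-- Frobenius inner product A : B -/
def frob (A B : M2) : ℝ := ∑ i, ∑ j, A i j * B i j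
/-- parametrization of the edge with endpoints A, B -/
def edgeParam (A B : Pt) (t : ℝ) : Pt := A + t • (B - A)

/-- an ℝ²-valued polynomial of degree ≤ k in the edge parameter -/
def IsEdgePoly (k : ℕ) (g : ℝ → Pt) : Prop :=
  ∃ q : Fin 2 → Polynomial ℝ, (∀ i, (q i).natDegree ≤ k) ∧
    ∀ (t : ℝ) (i : Fin 2), g t i = (q i).eval t

/-- membership in the local VEM stress space Σ_h(E): τ = Cε(w) for some
displacement w, the normal trace on each edge is a polynomial of degree ≤ k,
and div τ is a polynomial of degree ≤ k.  The polygon E has nE edges with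
endpoints A e, B e and (length-scaled) outward normals nu e. -/
def InSigmaH {nE : ℕ} (k : ℕ) (A B nu : Fin nE → Pt) (C : M2 →ₗ[ℝ] M2)
    (τ : Pt → M2) : Prop :=
  (∃ w : Pt → Pt, ContDiff ℝ 2 w ∧ ∀ x, τ x = C (sgrad w x)) ∧
  (∀ e : Fin nE,
    IsEdgePoly k (fun t => (τ (edgeParam (A e) (B e) t)).mulVec (nu e))) ∧
  IsVPoly k (mdiv τ)

section AuxUnisolvence

lemma contDiff_pd {n : ℕ} {g : Pt → ℝ} (hg : ContDiff ℝ (n+1) g) (j : Fin 2) :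
    ContDiff ℝ n (pd j g) := by
  have hg' : ContDiff ℝ ((n : WithTop ℕ∞) + 1) g := by exact_mod_cast hg
  have h : ContDiff ℝ n (fderiv ℝ g) := (contDiff_succ_iff_fderiv.mp hg').2.2
  exact (ContinuousLinearMap.apply ℝ ℝ (Pi.single j 1)).contDiff.comp h

lemma pd_mul {f g : Pt → ℝ} {x : Pt} (hf : DifferentiableAt ℝ f x)
    (hg : DifferentiableAt ℝ g x) (j : Fin 2) :
    pd j (fun y => f y * g y) x = pd j f x * g x + f x * pd j g x := by
  unfold pd
  rw [fderiv_fun_mul hf hg]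
  simp [ContinuousLinearMap.add_apply, ContinuousLinearMap.smul_apply]
  ring

lemma pd_sum {ι : Type*} (s : Finset ι) (f : ι → Pt → ℝ) {x : Pt}
    (hf : ∀ i ∈ s, DifferentiableAt ℝ (f i) x) (j : Fin 2) :
    pd j (fun y => ∑ i ∈ s, f i y) x = ∑ i ∈ s, pd j (f i) x := by
  unfold pd; rw [fderiv_fun_sum hf]; simp

lemma pd_affine (c b d : ℝ) (m j : Fin 2) (x : Pt) :
    pd j (fun y : Pt => c + b * (y m - d)) x = b * (Pi.single j 1 : Pt) m := by
  have h : HasFDerivAt (fun y : Pt => c + b * (y m - d))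
      (b • (ContinuousLinearMap.proj m : Pt →L[ℝ] ℝ)) x := by
    have h1 : HasFDerivAt (fun y : Pt => y m)
        (ContinuousLinearMap.proj m : Pt →L[ℝ] ℝ) x :=
      (ContinuousLinearMap.proj m : Pt →L[ℝ] ℝ).hasFDerivAt
    simpa using ((h1.sub_const d).const_mul b).const_add c
  rw [pd, h.fderiv]
  simp

lemma contDiff_affine (n : WithTop ℕ∞) (c b d : ℝ) (m : Fin 2) :
    ContDiff ℝ n (fun y : Pt => c + b * (y m - d)) := by
  have h1 : ContDiff ℝ n (fun y : Pt => y m) :=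
    (ContinuousLinearMap.proj m : Pt →L[ℝ] ℝ).contDiff
  exact contDiff_const.add (contDiff_const.mul (h1.sub contDiff_const))

lemma rigid_apply0 (xC a : Pt) (b : ℝ) :
    (fun y => rigid xC a b y 0) = fun y : Pt => a 0 + b * (y 1 - xC 1) := by
  funext y; simp [rigid, perp]

lemma rigid_apply1 (xC a : Pt) (b : ℝ) :
    (fun y => rigid xC a b y 1) = fun y : Pt => a 1 + (-b) * (y 0 - xC 0) := by
  funext y; simp [rigid, perp]; ring

lemma sgrad_symm (v : Pt → Pt) (x : Pt) : (sgrad v x)ᵀ = sgrad v x := by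
  ext i j
  simp only [Matrix.transpose_apply, sgrad, Matrix.of_apply]
  ring

lemma div_formula (τ : Pt → M2) (v : Pt → Pt) (x : Pt)
    (hτd : ∀ i j, DifferentiableAt ℝ (fun y => τ y i j) x)
    (hvd : ∀ i, DifferentiableAt ℝ (fun y => v y i) x) :
    ∑ j, pd j (fun y => ((τ y)ᵀ.mulVec (v y)) j) x
      = (mdiv τ x) ⬝ᵥ (v x) + ∑ i, ∑ j, τ x i j * pd j (fun y => v y i) x := by
  have hF : ∀ j, pd j (fun y => ((τ y)ᵀ.mulVec (v y)) j) x
      = ∑ i, (pd j (fun y => τ y i j) x * v x i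
          + τ x i j * pd j (fun y => v y i) x) := by
    intro j
    have he : (fun y => ((τ y)ᵀ.mulVec (v y)) j)
        = fun y => ∑ i, τ y i j * v y i := by
      funext y
      simp [Matrix.mulVec, dotProduct, Matrix.transpose_apply]
    rw [he, pd_sum _ (fun i y => τ y i j * v y i) (fun i _ => (hτd i j).mul (hvd i))]
    exact Finset.sum_congr rfl fun i _ => pd_mul (hτd i j) (hvd i) j
  simp only [hF, mdiv, dotProduct, Fin.sum_univ_two]
  ring

lemma nn_int_zero {X : Type*} [TopologicalSpace X] [MeasurableSpace X]
    [OpensMeasurableSpace X] [T2Space X] (μ : Measure X) [IsFiniteMeasureOnCompacts μ]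
    [μ.IsOpenPosMeasure] {g : X → ℝ} (hg : Continuous g) {E K : Set X}
    (hEm : MeasurableSet E) (hEo : IsOpen E) (hK : IsCompact K) (hEK : E ⊆ K)
    (hnn : ∀ x ∈ E, 0 ≤ g x) (h0 : ∫ x in E, g x ∂μ = 0) : ∀ x ∈ E, g x = 0 := by
  intro x hx
  by_contra hne
  have hint : IntegrableOn g E μ :=
    (hg.continuousOn.integrableOn_compact hK).mono_set hEK
  have hae : 0 ≤ᵐ[μ.restrict E] g := (ae_restrict_iff' hEm).2 (ae_of_all _ hnn)
  have hpos : 0 < ∫ x in E, g x ∂μ := by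
    rw [setIntegral_pos_iff_support_of_nonneg_ae hae hint]
    have hU : IsOpen (E ∩ g ⁻¹' {y | y ≠ 0}) :=
      hEo.inter (IsOpen.preimage hg isOpen_compl_singleton)
    have hUsub : E ∩ g ⁻¹' {y | y ≠ 0} ⊆ Function.support g ∩ E :=
      fun y hy => ⟨hy.2, hy.1⟩
    exact lt_of_lt_of_le (hU.measure_pos μ ⟨x, hx, hne⟩) (measure_mono hUsub)
  exact absurd h0 (ne_of_gt hpos)

lemma edge_poly_zero (q : Fin 2 → Polynomial ℝ)
    (h0 : (∫ t in (0:ℝ)..1, ∑ i : Fin 2, (q i).eval t * (q i).eval t) = 0) :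
    ∀ (t : ℝ) (i : Fin 2), (q i).eval t = 0 := by
  set p : Polynomial ℝ := (q 0)^2 + (q 1)^2 with hp
  have hev : ∀ t : ℝ, p.eval t = ∑ i : Fin 2, (q i).eval t * (q i).eval t := by
    intro t; simp [hp, Fin.sum_univ_two, sq]
  have hI01 : (∫ t in (0:ℝ)..1, p.eval t) = 0 := by
    rw [intervalIntegral.integral_congr
      (g := fun t => ∑ i : Fin 2, (q i).eval t * (q i).eval t) (fun t _ => hev t)]
    exact h0
  have hI : (∫ t in Set.Ioo (0:ℝ) 1, p.eval t) = 0 := by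
    rw [← MeasureTheory.integral_Ioc_eq_integral_Ioo,
      ← intervalIntegral.integral_of_le zero_le_one]
    exact hI01
  have hzero : ∀ t ∈ Set.Ioo (0:ℝ) 1, p.eval t = 0 := by
    refine nn_int_zero volume (p.continuous_aeval.congr ?_) measurableSet_Ioo isOpen_Ioo
      isCompact_Icc Set.Ioo_subset_Icc_self (fun t _ => ?_) hI
    · intro t; rfl
    · rw [hev, Fin.sum_univ_two]
      nlinarith [sq_nonneg ((q 0).eval t), sq_nonneg ((q 1).eval t)]
  have hpz : p = 0 := by
    apply Polynomial.eq_zero_of_infinite_isRoot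
    apply Set.Infinite.mono (s := Set.Ioo (0:ℝ) 1) _ (Set.Ioo_infinite zero_lt_one)
    intro t ht; exact hzero t ht
  intro t i
  have h := hev t
  rw [hpz] at h
  simp only [Polynomial.eval_zero] at h
  have h' : ((q 0).eval t)^2 + ((q 1).eval t)^2 = 0 := by
    rw [Fin.sum_univ_two] at h; nlinarith [h]
  have h0' : (q 0).eval t = 0 := by
    nlinarith [sq_nonneg ((q 0).eval t), sq_nonneg ((q 1).eval t)]
  have h1' : (q 1).eval t = 0 := by
    nlinarith [sq_nonneg ((q 0).eval t), sq_nonneg ((q 1).eval t)]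
  fin_cases i <;> assumption

end AuxUnisolvence

/-- unisolvence of the local stress degrees of freedom.  If
τ_h ∈ Σ_h(E) has vanishing edge moments of its normal trace against P_k(e)² on
every edge and vanishing interior moments of its divergence against RM_k^⊥(E),
then τ_h = 0.  The polygon E (open, bounded, of positive measure, with centroid
x_C) has edges parametrized by edgeParam (A e) (B e) with scaled outward
normals nu e, and the divergence theorem holds on E. -/
theorem unisolvence_local_stress_dofs
    (k : ℕ) (hk : 1 ≤ k) (nE : ℕ) (hnE : 3 ≤ nE)
    (E : Set Pt) (hEm : MeasurableSet E) (hEo : IsOpen E)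
    (hEb : Bornology.IsBounded E) (hEpos : 0 < volume E) (xC : Pt)
    (A B nu : Fin nE → Pt)
    (hdivthm : ∀ F : Pt → Pt, ContDiff ℝ 1 F →
      (∫ x in E, ∑ j, pd j (fun y => F y j) x) =
        ∑ e : Fin nE, ∫ t in (0:ℝ)..1, F (edgeParam (A e) (B e) t) ⬝ᵥ nu e)
    (C : M2 →ₗ[ℝ] M2)
    (hCsymval : ∀ σ : M2, σᵀ = σ → (C σ)ᵀ = C σ)
    (hCpos : ∀ σ : M2, σᵀ = σ → σ ≠ 0 → 0 < frob (C σ) σ)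
    (τ : Pt → M2) (hτ : InSigmaH k A B nu C τ)
    (hedge : ∀ e : Fin nE, ∀ q : Fin 2 → Polynomial ℝ, (∀ i, (q i).natDegree ≤ k) →
      (∫ t in (0:ℝ)..1,
        ((τ (edgeParam (A e) (B e) t)).mulVec (nu e)) ⬝ᵥ (fun i => (q i).eval t)) = 0)
    (hinterior : ∀ ψ : Pt → Pt, IsVPoly k ψ →
      (∀ r ∈ RMset xC, ∫ x in E, ψ x ⬝ᵥ r x = 0) →
      (∫ x in E, (mdiv τ x) ⬝ᵥ ψ x) = 0) :
    ∀ x ∈ E, τ x = 0 := by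
  obtain ⟨⟨w, hw2, hτw⟩, hedgepoly, hdivpoly⟩ := hτ
  -- smoothness of components
  have hwi : ∀ i, ContDiff ℝ 2 (fun y => w y i) := fun i =>
    (ContinuousLinearMap.proj i : Pt →L[ℝ] ℝ).contDiff.comp hw2
  have hpdw : ∀ i j, ContDiff ℝ 1 (pd j (fun y => w y i)) := fun i j =>
    contDiff_pd (n := 1) (by exact_mod_cast hwi i) j
  have hsge : ∀ a b, ContDiff ℝ 1 (fun x => sgrad w x a b) := by
    intro a b
    have he : (fun x => sgrad w x a b)
        = fun x => (pd b (fun y => w y a) x + pd a (fun y => w y b) x) / 2 := rfl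
    rw [he]
    exact ((hpdw a b).add (hpdw b a)).div_const 2
  -- entries of τ are C¹
  have hCdecomp : ∀ (M : M2) (i j : Fin 2),
      C M i j = ∑ a, ∑ b, M a b * (C (Matrix.single a b 1)) i j := by
    intro M i j
    conv_lhs => rw [Matrix.matrix_eq_sum_single M]
    have hsb : ∀ a b : Fin 2, Matrix.single a b (M a b)
        = M a b • Matrix.single a b (1:ℝ) := by
      intro a b; rw [Matrix.smul_single]; norm_num
    simp only [hsb, map_sum, _root_.map_smul, Matrix.sum_apply, Matrix.smul_apply,
      smul_eq_mul]
  have hτe : ∀ i j, ContDiff ℝ 1 (fun x => τ x i j) := by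
    intro i j
    have he : (fun x => τ x i j)
        = fun x => ∑ a, ∑ b, sgrad w x a b * (C (Matrix.single a b 1)) i j := by
      funext x; rw [hτw x, hCdecomp]
    rw [he]
    exact ContDiff.sum fun a _ => ContDiff.sum fun b _ => (hsge a b).mul contDiff_const
  have hτd : ∀ (x : Pt) i j, DifferentiableAt ℝ (fun y => τ y i j) x := fun x i j =>
    ((hτe i j).differentiable one_ne_zero).differentiableAt
  have hτc : ∀ i j, Continuous fun x => τ x i j := fun i j => (hτe i j).continuous
  have hmdc : ∀ i, Continuous fun x => mdiv τ x i := by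
    intro i
    have he : (fun x => mdiv τ x i) = fun x => ∑ j, pd j (fun y => τ y i j) x := rfl
    rw [he]
    exact continuous_finset_sum _ fun j _ =>
      (contDiff_zero.mp (contDiff_pd (n := 0) (by exact_mod_cast hτe i j) j))
  -- symmetry of τ
  have hsym : ∀ x : Pt, τ x 0 1 = τ x 1 0 := by
    intro x
    have h := hCsymval (sgrad w x) (sgrad_symm w x)
    have h2 := congrFun (congrFun h 0) 1
    rw [Matrix.transpose_apply] at h2
    rw [hτw x]
    exact h2.symm
  -- Step A: the normal trace vanishes on every edge
  have hA : ∀ (e : Fin nE) (t : ℝ) (i : Fin 2),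
      (τ (edgeParam (A e) (B e) t)).mulVec (nu e) i = 0 := by
    intro e t i
    obtain ⟨q, hqdeg, hqev0⟩ := hedgepoly e
    have hqev : ∀ (t : ℝ) (i : Fin 2),
        (τ (edgeParam (A e) (B e) t)).mulVec (nu e) i = (q i).eval t :=
      fun t i => hqev0 t i
    have h0 := hedge e q hqdeg
    have hrw : (∫ t in (0:ℝ)..1,
        ((τ (edgeParam (A e) (B e) t)).mulVec (nu e)) ⬝ᵥ (fun i => (q i).eval t))
        = ∫ t in (0:ℝ)..1, ∑ i : Fin 2, (q i).eval t * (q i).eval t := by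
      apply intervalIntegral.integral_congr
      intro t _
      simp only [dotProduct]
      exact Finset.sum_congr rfl fun i _ => by rw [hqev t i]
    rw [hrw] at h0
    rw [hqev t i]
    exact edge_poly_zero q h0 t i
  -- key divergence-theorem consequence
  have key : ∀ v : Pt → Pt, (∀ i, ContDiff ℝ 1 (fun y => v y i)) →
      (∫ x in E, ((mdiv τ x) ⬝ᵥ (v x)
        + ∑ i, ∑ j, τ x i j * pd j (fun y => v y i) x)) = 0 := by
    intro v hv
    set F : Pt → Pt := fun x => (τ x)ᵀ.mulVec (v x) with hFdef
    have hFc : ContDiff ℝ 1 F := by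
      rw [hFdef]
      apply contDiff_pi.2
      intro j
      have he : (fun x => ((τ x)ᵀ.mulVec (v x)) j) = fun x => ∑ i, τ x i j * v x i := by
        funext x; simp [Matrix.mulVec, dotProduct, Matrix.transpose_apply]
      rw [he]
      exact ContDiff.sum fun i _ => (hτe i j).mul (hv i)
    have hlhs : (fun x => ∑ j, pd j (fun y => F y j) x)
        = fun x => (mdiv τ x) ⬝ᵥ (v x)
            + ∑ i, ∑ j, τ x i j * pd j (fun y => v y i) x :=
      funext fun x => div_formula τ v x (fun i j => hτd x i j)
        (fun i => ((hv i).differentiable one_ne_zero).differentiableAt)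
    have hb := hdivthm F hFc
    rw [hlhs] at hb
    rw [hb]
    apply Finset.sum_eq_zero
    intro e _
    have hz : ∀ t : ℝ, F (edgeParam (A e) (B e) t) ⬝ᵥ nu e = 0 := by
      intro t
      have h0 := hA e t 0
      have h1 := hA e t 1
      simp only [hFdef, Matrix.mulVec, dotProduct, Fin.sum_univ_two,
        Matrix.transpose_apply] at h0 h1 ⊢
      linear_combination v (edgeParam (A e) (B e) t) 0 * h0
        + v (edgeParam (A e) (B e) t) 1 * h1
    rw [intervalIntegral.integral_congr (g := fun _ => (0:ℝ)) (fun t _ => hz t)]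
    simp
  -- rigid motions give no strain contribution
  have hrigidsum : ∀ (a : Pt) (b : ℝ) (x : Pt),
      ∑ i, ∑ j, τ x i j * pd j (fun y => rigid xC a b y i) x = 0 := by
    intro a b x
    simp only [Fin.sum_univ_two, rigid_apply0 xC a b, rigid_apply1 xC a b, pd_affine]
    have hs := hsym x
    simp [Pi.single_apply]
    linear_combination b * hs
  -- rigid motions components are C¹
  have hrv : ∀ (a : Pt) (b : ℝ) (i : Fin 2),
      ContDiff ℝ 1 (fun y => rigid xC a b y i) := by
    intro a b i
    fin_cases i
    · show ContDiff ℝ 1 fun y => rigid xC a b y 0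
      rw [rigid_apply0]; exact contDiff_affine 1 _ _ _ _
    · show ContDiff ℝ 1 fun y => rigid xC a b y 1
      rw [rigid_apply1]; exact contDiff_affine 1 _ _ _ _
  -- Step B : div τ vanishes on E
  have hintdiv : (∫ x in E, (mdiv τ x) ⬝ᵥ (mdiv τ x)) = 0 := by
    apply hinterior (mdiv τ) hdivpoly
    intro r hr
    obtain ⟨a, b, rfl⟩ := hr
    have h := key (rigid xC a b) (hrv a b)
    simp only [hrigidsum, add_zero] at h
    exact h
  have hmdiv0 : ∀ x ∈ E, ∀ i, mdiv τ x i = 0 := by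
    have hcont : Continuous fun x => (mdiv τ x) ⬝ᵥ (mdiv τ x) := by
      have he : (fun x => (mdiv τ x) ⬝ᵥ (mdiv τ x))
          = fun x => ∑ i, mdiv τ x i * mdiv τ x i := rfl
      rw [he]
      exact continuous_finset_sum _ fun i _ => (hmdc i).mul (hmdc i)
    have hnn : ∀ x ∈ E, 0 ≤ (mdiv τ x) ⬝ᵥ (mdiv τ x) := by
      intro x _
      simp only [dotProduct, Fin.sum_univ_two]
      nlinarith [sq_nonneg (mdiv τ x 0), sq_nonneg (mdiv τ x 1)]
    have hz := nn_int_zero volume hcont hEm hEo hEb.isCompact_closure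
      subset_closure hnn hintdiv
    intro x hx i
    have h := hz x hx
    simp only [dotProduct, Fin.sum_univ_two] at h
    have h0 : mdiv τ x 0 = 0 := by nlinarith [sq_nonneg (mdiv τ x 0), sq_nonneg (mdiv τ x 1)]
    have h1 : mdiv τ x 1 = 0 := by nlinarith [sq_nonneg (mdiv τ x 0), sq_nonneg (mdiv τ x 1)]
    fin_cases i <;> assumption
  -- Step C : energy identity
  have hw1 : ∀ i, ContDiff ℝ 1 (fun y => w y i) := fun i =>
    (hwi i).of_le (by norm_num)
  have hkeyw := key w hw1
  have hfrobint : (∫ x in E, frob (τ x) (sgrad w x)) = 0 := by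
    have heq : Set.EqOn (fun x => frob (τ x) (sgrad w x))
        (fun x => (mdiv τ x) ⬝ᵥ (w x)
          + ∑ i, ∑ j, τ x i j * pd j (fun y => w y i) x) E := by
      intro x hx
      have hm0 := hmdiv0 x hx 0
      have hm1 := hmdiv0 x hx 1
      have hdot : (mdiv τ x) ⬝ᵥ (w x) = 0 := by
        simp [dotProduct, Fin.sum_univ_two, hm0, hm1]
      have hfr : frob (τ x) (sgrad w x)
          = ∑ i, ∑ j, τ x i j * pd j (fun y => w y i) x := by
        simp only [frob, sgrad, Fin.sum_univ_two, Matrix.of_apply]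
        linear_combination ((pd 0 (fun y => w y 1) x - pd 1 (fun y => w y 0) x) / 2)
          * hsym x
      simp only [hdot, zero_add, hfr]
    rw [MeasureTheory.setIntegral_congr_fun hEm heq]
    exact hkeyw
  have hnn : ∀ x ∈ E, 0 ≤ frob (τ x) (sgrad w x) := by
    intro x _
    rcases eq_or_ne (sgrad w x) 0 with h | h
    · rw [h]; simp [frob]
    · have hp := hCpos (sgrad w x) (sgrad_symm w x) h
      rw [hτw x]
      exact hp.le
  have hcont : Continuous fun x => frob (τ x) (sgrad w x) := by
    have he : (fun x => frob (τ x) (sgrad w x))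
        = fun x => ∑ i, ∑ j, τ x i j * sgrad w x i j := rfl
    rw [he]
    exact continuous_finset_sum _ fun i _ => continuous_finset_sum _ fun j _ =>
      (hτc i j).mul (contDiff_zero.mp ((hsge i j).of_le (by norm_num)))
  have hfz := nn_int_zero volume hcont hEm hEo hEb.isCompact_closure
    subset_closure hnn hfrobint
  intro x hx
  have hσ : sgrad w x = 0 := by
    by_contra h
    have hp := hCpos (sgrad w x) (sgrad_symm w x) h
    rw [← hτw x] at hp
    exact absurd (hfz x hx) (ne_of_gt hp)
  rw [hτw x, hσ, map_zero]
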